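/- For any rate matrix Q indexed by a nonempty finite set 𝒳 and any real Δ ≥ 0, one has ‖e^{QΔ} − (I + ΔQ)‖ ≤ Δ²‖Q‖². -/

import Mathlib

open scoped BigOperators

/-- The operator norm of a matrix induced by the supremum norm on `X → ℝ`:
`‖A‖ = max_{x} Σ_{y} |A x y|`. -/
noncomputable def matNorm {X : Type*} [Fintype X] (A : Matrix X X ℝ) : ℝ :=
  ⨆ x, ∑ y, |A x y|

/-- A (transition) rate matrix: nonnegative off-diagonal entries, rows summing to zero. -/
def IsRateMatrix {X : Type*} [Fintype X] (Q : Matrix X X ℝ) : Prop :=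
  (∀ x y, x ≠ y → 0 ≤ Q x y) ∧ ∀ x, ∑ y, Q x y = 0

/-- The matrix exponential `e^A = Σ_{k≥0} A^k / k!`. -/
noncomputable def mexp {X : Type*} [Fintype X] [DecidableEq X] (A : Matrix X X ℝ) :
    Matrix X X ℝ :=
  ∑' k : ℕ, ((k.factorial : ℝ)⁻¹) • A ^ k

attribute [local instance] Matrix.linftyOpNormedAddCommGroup Matrix.linftyOpNormedRing
  Matrix.linftyOpNormedAlgebra

set_option linter.unusedSectionVars false

section Helpers

variable {X : Type*} [Fintype X] [Nonempty X] [DecidableEq X]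

lemma row_sum_eq (A : Matrix X X ℝ) (x : X) :
    ∑ y, |A x y| = (((∑ y, ‖A x y‖₊ : NNReal) : ℝ)) := by
  push_cast
  simp [Real.norm_eq_abs]

lemma matNorm_eq (A : Matrix X X ℝ) : (⨆ x, ∑ y, |A x y|) = ‖A‖ := by
  rw [Matrix.linfty_opNorm_def]
  apply le_antisymm
  · apply ciSup_le
    intro x
    rw [row_sum_eq]
    have := Finset.le_sup (f := fun i : X => ∑ j, ‖A i j‖₊) (Finset.mem_univ x)
    exact_mod_cast this
  · obtain ⟨x, -, hx⟩ := Finset.exists_mem_eq_sup Finset.univ Finset.univ_nonempty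
      (fun i : X => ∑ j, ‖A i j‖₊)
    rw [hx, ← row_sum_eq]
    exact le_ciSup (f := fun x : X => ∑ y, |A x y|)
      (Set.Finite.bddAbove (Set.finite_range _)) x

lemma row_le_norm (A : Matrix X X ℝ) (x : X) : ∑ y, |A x y| ≤ ‖A‖ := by
  rw [← matNorm_eq]
  exact le_ciSup (f := fun x : X => ∑ y, |A x y|)
    (Set.Finite.bddAbove (Set.finite_range _)) x

lemma norm_le_of_rows (A : Matrix X X ℝ) (c : ℝ) (h : ∀ x, ∑ y, |A x y| ≤ c) : ‖A‖ ≤ c := by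
  rw [← matNorm_eq]
  exact ciSup_le h

lemma entry_abs_le_norm (A : Matrix X X ℝ) (x y : X) : |A x y| ≤ ‖A‖ :=
  (Finset.single_le_sum (f := fun z => |A x z|) (fun z _ => abs_nonneg _)
    (Finset.mem_univ y)).trans (row_le_norm A x)

lemma stoch_norm (A : Matrix X X ℝ)
    (hoff : ∀ x y, x ≠ y → 0 ≤ A x y) (hrow : ∀ x, ∑ y, A x y = 0)
    (n : ℕ) (hn : ‖A‖ ≤ n) (hpos : 0 < n) :
    ‖(1 : Matrix X X ℝ) + (n : ℝ)⁻¹ • A‖ ≤ 1 := by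
  apply norm_le_of_rows
  intro x
  have hnR : (0:ℝ) < n := by exact_mod_cast hpos
  set S := (1 : Matrix X X ℝ) + (n : ℝ)⁻¹ • A with hS
  have hSapp : ∀ y, S x y = (if x = y then (1:ℝ) else 0) + (n:ℝ)⁻¹ * A x y := by
    intro y
    simp [hS, Matrix.add_apply, Matrix.smul_apply, Matrix.one_apply, smul_eq_mul]
  have hnonneg : ∀ y, 0 ≤ S x y := by
    intro y
    rw [hSapp]
    by_cases hxy : x = y
    · subst hxy
      rw [if_pos rfl]
      have h1 : -(n:ℝ) ≤ A x x := neg_le_of_abs_le ((entry_abs_le_norm A x x).trans hn)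
      have h2 : (n:ℝ)⁻¹ * (-(n:ℝ)) ≤ (n:ℝ)⁻¹ * A x x :=
        mul_le_mul_of_nonneg_left h1 (inv_nonneg.mpr hnR.le)
      have h3 : (n:ℝ)⁻¹ * (-(n:ℝ)) = -1 := by field_simp
      linarith
    · simp only [if_neg hxy]
      have := hoff x y hxy
      positivity
  refine le_of_eq ?_
  calc ∑ y, |S x y| = ∑ y, S x y := by
        refine Finset.sum_congr rfl fun y _ => abs_of_nonneg (hnonneg y)
    _ = 1 := by
        simp only [hSapp]
        rw [Finset.sum_add_distrib, ← Finset.mul_sum, hrow, Finset.sum_ite_eq]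
        simp

open NormedSpace in
lemma exp_remainder (M : Matrix X X ℝ) :
    ‖exp M - 1 - M‖ ≤ ‖M‖ ^ 2 * Real.exp ‖M‖ := by
  have hsum : Summable (fun k : ℕ => ((k.factorial : ℝ)⁻¹) • M ^ k) :=
    expSeries_summable' (𝕂 := ℝ) M
  have heq : exp M - 1 - M = ∑' k : ℕ, (((k + 2).factorial : ℝ)⁻¹) • M ^ (k + 2) := by
    rw [exp_eq_tsum ℝ]
    show (∑' k : ℕ, ((k.factorial : ℝ)⁻¹) • M ^ k) - 1 - M = _
    rw [← Summable.sum_add_tsum_nat_add 2 hsum]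
    simp [Finset.sum_range_succ]
    abel
  have hnormsum : Summable (fun k : ℕ => ‖(((k + 2).factorial : ℝ)⁻¹) • M ^ (k + 2)‖) :=
    (summable_nat_add_iff 2).mpr (norm_expSeries_summable' (𝕂 := ℝ) M)
  have hg : Summable (fun k : ℕ => ‖M‖ ^ 2 * (‖M‖ ^ k / k.factorial)) :=
    (Real.summable_pow_div_factorial ‖M‖).mul_left _
  have hexp : (∑' k : ℕ, ‖M‖ ^ k / k.factorial) = Real.exp ‖M‖ := by
    rw [Real.exp_eq_exp_ℝ, exp_eq_tsum_div]
  rw [heq]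
  calc ‖∑' k : ℕ, (((k + 2).factorial : ℝ)⁻¹) • M ^ (k + 2)‖
      ≤ ∑' k : ℕ, ‖(((k + 2).factorial : ℝ)⁻¹) • M ^ (k + 2)‖ :=
        norm_tsum_le_tsum_norm hnormsum
    _ ≤ ∑' k : ℕ, ‖M‖ ^ 2 * (‖M‖ ^ k / k.factorial) := by
        refine Summable.tsum_le_tsum ?_ hnormsum hg
        intro k
        rw [norm_smul]
        have h1 : ‖M ^ (k + 2)‖ ≤ ‖M‖ ^ (k + 2) := norm_pow_le' M (Nat.succ_pos _)
        have h2 : ((k.factorial : ℝ))⁻¹ ≥ (((k + 2).factorial : ℝ))⁻¹ := by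
          apply inv_anti₀
          · exact_mod_cast k.factorial_pos
          · exact_mod_cast Nat.factorial_le (by omega)
        have h3 : (0:ℝ) < ((k + 2).factorial : ℝ) := by exact_mod_cast (k+2).factorial_pos
        have h4 : (0:ℝ) < (k.factorial : ℝ) := by exact_mod_cast k.factorial_pos
        calc ‖(((k + 2).factorial : ℝ)⁻¹)‖ * ‖M ^ (k + 2)‖
            ≤ (((k + 2).factorial : ℝ))⁻¹ * ‖M‖ ^ (k + 2) := by
              rw [Real.norm_eq_abs, abs_of_pos (inv_pos.mpr h3)]
              exact mul_le_mul_of_nonneg_left h1 (inv_pos.mpr h3).le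
          _ ≤ ((k.factorial : ℝ))⁻¹ * ‖M‖ ^ (k + 2) := by
              exact mul_le_mul_of_nonneg_right h2 (pow_nonneg (norm_nonneg _) _)
          _ = ‖M‖ ^ 2 * (‖M‖ ^ k / k.factorial) := by ring
    _ = ‖M‖ ^ 2 * Real.exp ‖M‖ := by
        rw [tsum_mul_left, ← hexp]

open NormedSpace in
lemma norm_exp_le' (M : Matrix X X ℝ) : ‖exp M‖ ≤ Real.exp ‖M‖ := by
  have hexp : (∑' k : ℕ, ‖M‖ ^ k / k.factorial) = Real.exp ‖M‖ := by
    rw [Real.exp_eq_exp_ℝ, exp_eq_tsum_div]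
  rw [exp_eq_tsum ℝ]
  calc ‖∑' k : ℕ, ((k.factorial : ℝ)⁻¹) • M ^ k‖
      ≤ ∑' k : ℕ, ‖((k.factorial : ℝ)⁻¹) • M ^ k‖ :=
        norm_tsum_le_tsum_norm (norm_expSeries_summable' (𝕂 := ℝ) M)
    _ ≤ ∑' k : ℕ, ‖M‖ ^ k / k.factorial := by
        refine Summable.tsum_le_tsum ?_ (norm_expSeries_summable' (𝕂 := ℝ) M)
          (Real.summable_pow_div_factorial ‖M‖)
        intro k
        rw [norm_smul]
        have h4 : (0:ℝ) < (k.factorial : ℝ) := by exact_mod_cast k.factorial_pos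
        rw [Real.norm_eq_abs, abs_of_pos (inv_pos.mpr h4)]
        rw [div_eq_inv_mul]
        exact mul_le_mul_of_nonneg_left (norm_pow_le M k) (inv_pos.mpr h4).le
    _ = Real.exp ‖M‖ := hexp

lemma norm_pow_le_one (S : Matrix X X ℝ) (hS : ‖S‖ ≤ 1) (j : ℕ) : ‖S ^ j‖ ≤ 1 :=
  (norm_pow_le S j).trans (pow_le_one₀ (norm_nonneg _) hS)

lemma tel1 (S : Matrix X X ℝ) (hS : ‖S‖ ≤ 1) (j : ℕ) : ‖S ^ j - 1‖ ≤ j * ‖S - 1‖ := by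
  induction j with
  | zero => simp
  | succ j ih =>
    have hid : S ^ (j + 1) - 1 = S ^ j * (S - 1) + (S ^ j - 1) := by
      rw [pow_succ]; noncomm_ring
    calc ‖S ^ (j + 1) - 1‖ ≤ ‖S ^ j * (S - 1)‖ + ‖S ^ j - 1‖ := by
          rw [hid]; exact norm_add_le _ _
      _ ≤ ‖S ^ j‖ * ‖S - 1‖ + j * ‖S - 1‖ := by
          gcongr
          exact norm_mul_le _ _
      _ ≤ 1 * ‖S - 1‖ + j * ‖S - 1‖ := by
          gcongr
          exact norm_pow_le_one S hS j
      _ = (j + 1 : ℕ) * ‖S - 1‖ := by push_cast; ring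

lemma tel2 (S : Matrix X X ℝ) (hS : ‖S‖ ≤ 1) (n : ℕ) :
    ‖S ^ n - 1 - n • (S - 1)‖ ≤ (n : ℝ) ^ 2 * ‖S - 1‖ ^ 2 := by
  induction n with
  | zero => simp
  | succ n ih =>
    have hid : S ^ (n + 1) - 1 - (n + 1) • (S - 1)
        = (S ^ n - 1 - n • (S - 1)) + (S ^ n - 1) * (S - 1) := by
      rw [pow_succ, succ_nsmul]
      noncomm_ring
    have h1 : ‖(S ^ n - 1) * (S - 1)‖ ≤ ((n : ℝ) * ‖S - 1‖) * ‖S - 1‖ := by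
      refine (norm_mul_le _ _).trans ?_
      gcongr
      exact tel1 S hS n
    calc ‖S ^ (n + 1) - 1 - (n + 1) • (S - 1)‖
        = ‖(S ^ n - 1 - n • (S - 1)) + (S ^ n - 1) * (S - 1)‖ := by rw [hid]
      _ ≤ (n : ℝ) ^ 2 * ‖S - 1‖ ^ 2 + ((n : ℝ) * ‖S - 1‖) * ‖S - 1‖ :=
          (norm_add_le _ _).trans (by gcongr)
      _ ≤ ((n + 1 : ℕ) : ℝ) ^ 2 * ‖S - 1‖ ^ 2 := by
          push_cast
          nlinarith [norm_nonneg (S - 1), sq_nonneg ‖S - 1‖, Nat.cast_nonneg (α := ℝ) n]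

lemma tel3 (P S : Matrix X X ℝ) (c : ℝ) (hc : 1 ≤ c) (hP : ‖P‖ ≤ c) (hS : ‖S‖ ≤ c) (n : ℕ) :
    ‖P ^ n - S ^ n‖ ≤ n * c ^ n * ‖P - S‖ := by
  induction n with
  | zero => simp
  | succ n ih =>
    have hid : P ^ (n + 1) - S ^ (n + 1) = P ^ n * (P - S) + (P ^ n - S ^ n) * S := by
      rw [pow_succ, pow_succ]; noncomm_ring
    have hc0 : (0:ℝ) ≤ c := le_trans zero_le_one hc
    have hPn : ‖P ^ n‖ ≤ c ^ n := (norm_pow_le P n).trans (pow_le_pow_left₀ (norm_nonneg _) hP n)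
    calc ‖P ^ (n + 1) - S ^ (n + 1)‖
        ≤ ‖P ^ n‖ * ‖P - S‖ + ‖P ^ n - S ^ n‖ * ‖S‖ := by
          rw [hid]
          exact (norm_add_le _ _).trans (add_le_add (norm_mul_le _ _) (norm_mul_le _ _))
      _ ≤ c ^ n * ‖P - S‖ + (n * c ^ n * ‖P - S‖) * c := by
          gcongr
      _ ≤ (n + 1 : ℕ) * c ^ (n + 1) * ‖P - S‖ := by
          push_cast
          rw [pow_succ c n]
          nlinarith [norm_nonneg (P - S), pow_nonneg hc0 n,
            Nat.cast_nonneg (α := ℝ) n,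
            mul_nonneg (mul_nonneg (sub_nonneg.2 hc) (pow_nonneg hc0 n)) (norm_nonneg (P - S))]

end Helpers

open NormedSpace in
theorem stmt4 {X : Type*} [Fintype X] [Nonempty X] [DecidableEq X]
    (Q : Matrix X X ℝ) (hQ : IsRateMatrix Q) (Δ : ℝ) (hΔ : 0 ≤ Δ) :
    matNorm (mexp (Δ • Q) - (1 + Δ • Q)) ≤ Δ ^ 2 * matNorm Q ^ 2 := by
  classical
  set A : Matrix X X ℝ := Δ • Q with hA
  have hoff : ∀ x y, x ≠ y → 0 ≤ A x y := fun x y hxy =>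
    mul_nonneg hΔ (hQ.1 x y hxy)
  have hrow : ∀ x, ∑ y, A x y = 0 := by
    intro x
    simp only [hA, Matrix.smul_apply, smul_eq_mul, ← Finset.mul_sum, hQ.2 x, mul_zero]
  have hmexp : mexp A = exp A := by rw [mexp, exp_eq_tsum ℝ]
  have hgoal1 : matNorm (mexp A - (1 + A)) = ‖exp A - (1 + A)‖ := by
    rw [hmexp]; exact matNorm_eq _
  have hQnorm : matNorm Q = ‖Q‖ := matNorm_eq Q
  have haQ : ‖A‖ = Δ * ‖Q‖ := by
    rw [hA, norm_smul, Real.norm_eq_abs, abs_of_nonneg hΔ]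
  have hrhs : Δ ^ 2 * matNorm Q ^ 2 = ‖A‖ ^ 2 := by rw [hQnorm, haQ]; ring
  rw [hgoal1, hrhs]
  have ha0 : (0:ℝ) ≤ ‖A‖ := norm_nonneg A
  set a : ℝ := ‖A‖ with haa
  set K : ℝ := a ^ 2 * Real.exp a * Real.exp a with hK
  have hK0 : 0 ≤ K := by positivity
  refine le_of_forall_pos_le_add ?_
  intro ε hε
  obtain ⟨n, hn⟩ := exists_nat_gt (max a (K / ε))
  have hn0R : (0:ℝ) < n := lt_of_le_of_lt (le_max_left a (K / ε) |>.trans' ha0) hn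
  have hn0 : 0 < n := by exact_mod_cast hn0R
  have hn1 : (1:ℝ) ≤ n := by exact_mod_cast hn0
  have hna : a ≤ n := ((le_max_left a (K / ε)).trans_lt hn).le
  have hnK : K / (n:ℝ) < ε := by
    have h1 : K / ε < n := (le_max_right a (K / ε)).trans_lt hn
    rw [div_lt_iff₀ hn0R]
    rw [div_lt_iff₀ hε] at h1
    linarith
  have hne : ((n:ℝ)) ≠ 0 := ne_of_gt hn0R
  set B : Matrix X X ℝ := (n : ℝ)⁻¹ • A with hB
  set S : Matrix X X ℝ := 1 + B with hSdef
  set P : Matrix X X ℝ := exp B with hP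
  have hS1 : S - 1 = B := by rw [hSdef]; exact add_sub_cancel_left 1 B
  have ht : ‖B‖ = a / n := by
    rw [hB, norm_smul, Real.norm_eq_abs, abs_of_nonneg (inv_nonneg.mpr hn0R.le), ← haa]
    ring
  have htle : ‖B‖ ≤ a := by
    rw [ht]
    exact div_le_self ha0 hn1
  have hSnorm : ‖S‖ ≤ 1 := stoch_norm A hoff hrow n hna hn0
  have hnsmulB : n • B = A := by
    rw [hB, ← Nat.cast_smul_eq_nsmul ℝ, smul_smul, mul_inv_cancel₀ hne, one_smul]
  have hexpA : exp A = P ^ n := by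
    rw [hP, ← Matrix.exp_nsmul, hnsmulB]
  have key : exp A - (1 + A) = (P ^ n - S ^ n) + (S ^ n - 1 - n • (S - 1)) := by
    rw [hexpA, hS1, hnsmulB]
    abel
  -- bound on the second piece
  have hb2 : ‖S ^ n - 1 - n • (S - 1)‖ ≤ a ^ 2 := by
    refine (tel2 S hSnorm n).trans ?_
    rw [hS1, ht]
    rw [div_pow]
    rw [show ((n:ℝ))^2 * (a^2 / (n:ℝ)^2) = a^2 by field_simp]
  -- bound on the first piece
  have hc1 : (1:ℝ) ≤ Real.exp ‖B‖ := Real.one_le_exp (norm_nonneg B)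
  have hb1 : ‖P ^ n - S ^ n‖ ≤ n * (Real.exp ‖B‖) ^ n * ‖P - S‖ :=
    tel3 P S (Real.exp ‖B‖) hc1 (norm_exp_le' B) (hSnorm.trans hc1) n
  have hPS : ‖P - S‖ ≤ ‖B‖ ^ 2 * Real.exp ‖B‖ := by
    have : P - S = exp B - 1 - B := by rw [hP, hSdef]; abel
    rw [this]
    exact exp_remainder B
  have hexpn : (Real.exp ‖B‖) ^ n = Real.exp ((n:ℝ) * ‖B‖) := (Real.exp_nat_mul _ n).symm
  have hnt : (n:ℝ) * ‖B‖ = a := by rw [ht]; field_simp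
  have hb1' : ‖P ^ n - S ^ n‖ ≤ K / n := by
    refine hb1.trans ?_
    rw [hexpn, hnt]
    have step : (n:ℝ) * Real.exp a * ‖P - S‖ ≤ (n:ℝ) * Real.exp a * (‖B‖ ^ 2 * Real.exp ‖B‖) := by
      have hpos : (0:ℝ) ≤ (n:ℝ) * Real.exp a := by positivity
      exact mul_le_mul_of_nonneg_left hPS hpos
    refine step.trans ?_
    have heB : Real.exp (a / n) ≤ Real.exp a := Real.exp_le_exp.2 (ht ▸ htle)
    have e6 : (n:ℝ) * Real.exp a * ((a / n) ^ 2 * Real.exp (a / n))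
        = a ^ 2 * Real.exp a * Real.exp (a / n) / n := by field_simp
    rw [ht, e6, hK]
    gcongr
  -- combine
  calc ‖exp A - (1 + A)‖
      ≤ ‖P ^ n - S ^ n‖ + ‖S ^ n - 1 - n • (S - 1)‖ := by
        rw [key]; exact norm_add_le _ _
    _ ≤ K / n + a ^ 2 := add_le_add hb1' hb2
    _ ≤ a ^ 2 + ε := by linarith
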